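/- Define L ⊆ E^14 (coordinates (x₀; x₁,...,x₁₃) with x₁,...,x₁₃ indexed by points of P²𝔽₃, and Hermitian form −x₀ȳ₀ + Σᵢ₌₁¹³ xᵢȳᵢ) as the set of vectors with x₀ ≡ x₁ + ... + x₁₃ mod θ and (x₁,...,x₁₃) mod θ ∈ C^⊥, where C is the line difference code. Then L is spanned as an E-module by the 13 point roots (0; θ,0,...,0) (with θ in any of the last 13 positions) and the 13 line roots (1; 1,1,1,1,0,...,0) (with the 1's along a line of P²𝔽₃). -/

import Mathlib

noncomputable section
open scoped Classical

def ω : ℂ := -1/2 + (Real.sqrt 3 / 2) * Complex.I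
def θ : ℂ := ω - (starRingEnd ℂ) ω
def Eis : Subring ℂ := Subring.closure {ω}

/-- The projective plane `P²𝔽₃`. -/
abbrev P2F3 := Projectivization (ZMod 3) (Fin 3 → ZMod 3)

instance : Finite P2F3 := Quotient.finite _
noncomputable instance : Fintype P2F3 := Fintype.ofFinite P2F3

/-- Incidence of the line `ℓ` with the point `p`. -/
def incid (ℓ p : P2F3) : Prop := ∑ i, ℓ.rep i * p.rep i = 0

/-- The characteristic function of the line `ℓ`. -/
def chi (ℓ : P2F3) : P2F3 → ZMod 3 := fun p => if incid ℓ p then 1 else 0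

/-- The standard bilinear form on `𝔽₃^13`. -/
def dotP (x y : P2F3 → ZMod 3) : ZMod 3 := ∑ p, x p * y p

/-- The line difference code `C`. -/
def Cdiff : Submodule (ZMod 3) (P2F3 → ZMod 3) :=
  Submodule.span (ZMod 3) {v | ∃ ℓ m : P2F3, v = chi ℓ - chi m}

/-- The line code `C^⊥`. -/
def CdiffPerp : Set (P2F3 → ZMod 3) := {y | ∀ x ∈ Cdiff, dotP x y = 0}

/-- The lattice `L ⊆ Eis^14`: coordinates `(x₀; x_p, p ∈ P²𝔽₃)`, with
`x₀ ≡ ∑ x_p mod θ` and `(x_p) mod θ ∈ C^⊥`. -/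
def L16 : Set (Option P2F3 → ℂ) :=
  {x | (∀ i, x i ∈ Eis) ∧
    (∃ e ∈ Eis, x none - ∑ p : P2F3, x (some p) = θ * e) ∧
    ∃ c ∈ CdiffPerp, ∀ p : P2F3, ∃ e ∈ Eis, x (some p) - ((c p).val : ℂ) = θ * e}

/-- The point root associated to a point `q`. -/
def pointRoot (q : P2F3) : Option P2F3 → ℂ :=
  fun i => if i = some q then θ else 0

/-- The line root associated to a line `ℓ`. -/
def lineRoot (ℓ : P2F3) : Option P2F3 → ℂ := fun i =>
  match i with
  | none => 1
  | some p => if incid ℓ p then 1 else 0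

/-! ### Auxiliary material -/

/-! #### Arithmetic of `ω`, `θ`, `Eis` -/

lemma omega_mem : ω ∈ Eis := Subring.subset_closure rfl

lemma sqrt3_sq : (Real.sqrt 3 : ℝ) * Real.sqrt 3 = 3 := Real.mul_self_sqrt (by norm_num)

lemma conj_omega : (starRingEnd ℂ) ω = -1 - ω := by
  unfold ω
  simp only [map_add, map_mul, map_div₀, map_neg, map_one, map_ofNat, Complex.conj_I,
    Complex.conj_ofReal]
  ring_nf

lemma theta_eq : θ = 2 * ω + 1 := by
  rw [θ, conj_omega]; ring

lemma two_mem_Eis : (2:ℂ) ∈ Eis := by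
  have := add_mem (one_mem Eis) (one_mem Eis)
  norm_num at this
  have h2 := add_mem (one_mem Eis) (one_mem Eis); rwa [one_add_one_eq_two] at h2

lemma theta_mem : θ ∈ Eis := by
  rw [theta_eq]
  exact add_mem (mul_mem two_mem_Eis omega_mem) (one_mem _)

lemma omega_sq : ω * ω = -1 - ω := by
  simp only [ω, Complex.ext_iff, Complex.add_re, Complex.add_im, Complex.mul_re, Complex.mul_im,
    Complex.I_re, Complex.I_im, Complex.neg_re, Complex.neg_im, Complex.sub_re, Complex.sub_im,
    Complex.one_re, Complex.one_im, Complex.div_ofNat_re, Complex.div_ofNat_im,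
    Complex.ofReal_re, Complex.ofReal_im]
  norm_num
  constructor <;> nlinarith [sqrt3_sq]

lemma theta_sq : θ * θ = -3 := by
  rw [theta_eq]
  linear_combination 4 * omega_sq

/-- The ideal (θ) of `Eis`, as a predicate on `ℂ`. -/
def Ith (z : ℂ) : Prop := ∃ e ∈ Eis, z = θ * e

lemma ith_theta {e : ℂ} (he : e ∈ Eis) : Ith (θ * e) := ⟨e, he, rfl⟩

lemma ith_add {a b : ℂ} (ha : Ith a) (hb : Ith b) : Ith (a + b) := by
  obtain ⟨x, hx, rfl⟩ := ha; obtain ⟨y, hy, rfl⟩ := hb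
  exact ⟨x + y, add_mem hx hy, by ring⟩

lemma ith_sub {a b : ℂ} (ha : Ith a) (hb : Ith b) : Ith (a - b) := by
  obtain ⟨x, hx, rfl⟩ := ha; obtain ⟨y, hy, rfl⟩ := hb
  exact ⟨x - y, sub_mem hx hy, by ring⟩

lemma ith_sum {α : Type*} {s : Finset α} {f : α → ℂ} (h : ∀ i ∈ s, Ith (f i)) :
    Ith (∑ i ∈ s, f i) := by
  classical
  induction s using Finset.cons_induction with
  | empty => exact ⟨0, zero_mem _, by simp⟩
  | cons a s ha ih =>
    rw [Finset.sum_cons]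
    exact ith_add (h a (Finset.mem_cons_self a s)) (ih fun i hi => h i (Finset.mem_cons_of_mem hi))

lemma ith_int (m n : ℤ) (h : (m : ZMod 3) = (n : ZMod 3)) : Ith ((m : ℂ) - (n : ℂ)) := by
  have h0 : ((m - n : ℤ) : ZMod 3) = 0 := by push_cast; rw [h]; ring
  obtain ⟨k, hk⟩ := (ZMod.intCast_zmod_eq_zero_iff_dvd _ _).1 h0
  refine ⟨-(θ * k), neg_mem (mul_mem theta_mem (intCast_mem Eis k)), ?_⟩
  have hm : (m : ℂ) - (n : ℂ) = 3 * (k : ℂ) := by exact_mod_cast congrArg (fun z : ℤ => (z : ℂ)) hk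
  rw [hm]
  linear_combination (k:ℂ) * theta_sq

lemma ith_nat (m n : ℕ) (h : (m : ZMod 3) = (n : ZMod 3)) : Ith ((m : ℂ) - (n : ℂ)) := by
  have := ith_int m n (by push_cast; exact_mod_cast h)
  simpa using this

/-! #### Concrete data for `P²𝔽₃` -/

def vv : Fin 13 → Fin 3 → ZMod 3 := ![![0,0,1], ![0,1,0], ![0,1,1], ![0,1,2], ![1,0,0], ![1,0,1], ![1,0,2], ![1,1,0], ![1,1,1], ![1,1,2], ![1,2,0], ![1,2,1], ![1,2,2]]
def Hm : Fin 13 → Fin 13 → ZMod 3 := ![![0,0,0,0,0,0,0,0,2,2,1,1,1], ![0,0,0,0,0,0,1,0,2,1,0,2,1], ![0,0,0,0,0,0,0,0,2,2,0,2,1], ![0,0,0,0,0,0,0,0,1,0,0,0,0], ![0,0,0,1,0,0,0,0,1,1,0,1,2], ![0,0,0,0,0,0,0,0,1,2,0,1,2], ![0,0,0,0,0,0,0,0,0,0,0,0,0], ![0,0,0,0,0,0,0,0,1,1,0,2,2], ![0,0,0,0,0,0,0,0,0,0,0,0,0], ![0,0,0,0,0,0,0,0,0,0,0,0,0], ![0,0,0,0,0,0,0,0,0,0,0,0,0],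 ![0,0,0,0,0,0,0,0,0,0,0,0,0], ![0,0,0,0,0,0,0,0,0,0,0,0,0]]
def Nm : Fin 13 → Fin 13 → ZMod 3 := ![![0,0,1,2,1,2,0,0,0,0,0,0,0], ![0,0,1,2,1,0,0,2,0,0,0,0,0], ![0,0,2,1,0,0,0,0,0,0,0,0,0], ![0,0,0,0,0,0,0,0,0,0,0,0,0], ![0,0,2,2,1,2,0,2,0,0,0,0,0], ![0,1,1,1,2,1,0,0,0,0,0,0,0], ![0,0,0,0,0,0,0,0,0,0,0,0,0], ![1,0,1,1,2,0,0,1,0,0,0,0,0], ![0,0,0,0,0,0,0,0,0,0,0,0,0], ![0,0,0,0,0,0,0,0,0,0,0,0,0], ![0,0,0,0,0,0,0,0,0,0,0,0,0], ![0,0,0,0,0,0,0,0,0,0,0,0,0], ![0,0,0,0,0,0,0,0,0,0,0,0,0]]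

def dv (i j : Fin 13) : ZMod 3 := ∑ k, vv i k * vv j k
def Am (i j : Fin 13) : ZMod 3 := if dv i j = 0 then 1 else 0

set_option maxRecDepth 10000 in
lemma D1 : ∀ p q : Fin 13, (if p = q then (1:ZMod 3) else 0) =
    (∑ l, Am l p * Hm l q) + ∑ l, Nm p l * Am l q := by decide
lemma D2 : ∀ j : Fin 13, (∑ i, Am i j) = 1 := by decide
lemma D2' : ∀ i : Fin 13, (∑ j, Am i j) = 1 := by decide
lemma D3 : ∀ i j : Fin 13, (∑ k, Am i k * Am j k) = 1 := by decide
lemma D4 : ∀ j : Fin 13, (∑ i, (Am j i).val) = 4 := by decide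
lemma Dvne : ∀ i : Fin 13, vv i ≠ 0 := by decide
lemma Dsurj : ∀ u : Fin 3 → ZMod 3, u ≠ 0 → ∃ (i : Fin 13) (c : ZMod 3), c ≠ 0 ∧ c • vv i = u := by
  decide
lemma Dinj : ∀ i j : Fin 13, (∃ c : ZMod 3, c ≠ 0 ∧ c • vv j = vv i) → i = j := by decide

/-! #### The bridge between the abstract plane and the concrete data -/

lemma incid_mk (u w : Fin 3 → ZMod 3) (hu : u ≠ 0) (hw : w ≠ 0) :
    incid (Projectivization.mk _ u hu) (Projectivization.mk _ w hw) ↔ ∑ i, u i * w i = 0 := by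
  set L := Projectivization.mk (ZMod 3) u hu with hL
  set P := Projectivization.mk (ZMod 3) w hw with hP
  obtain ⟨a, ha⟩ : ∃ a : (ZMod 3)ˣ, a • u = L.rep := by
    rw [← Projectivization.mk_eq_mk_iff (K := ZMod 3) _ _ (Projectivization.rep_nonzero L) hu]
    rw [hL, Projectivization.mk_rep]
  obtain ⟨b, hb⟩ : ∃ b : (ZMod 3)ˣ, b • w = P.rep := by
    rw [← Projectivization.mk_eq_mk_iff (K := ZMod 3) _ _ (Projectivization.rep_nonzero P) hw]
    rw [hP, Projectivization.mk_rep]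
  have : ∑ i, L.rep i * P.rep i = (a : ZMod 3) * b * ∑ i, u i * w i := by
    rw [← ha, ← hb, Finset.mul_sum]
    refine Finset.sum_congr rfl fun i _ => ?_
    simp only [Pi.smul_apply, Units.smul_def, smul_eq_mul]; ring
  unfold incid
  rw [this, mul_eq_zero, mul_eq_zero]
  simp [a.ne_zero, b.ne_zero]

/-- The 13 concrete points. -/
def ep (i : Fin 13) : P2F3 := Projectivization.mk _ (vv i) (Dvne i)

lemma ep_bij : Function.Bijective ep := by
  constructor
  · intro i j h
    apply Dinj
    rw [ep, ep, Projectivization.mk_eq_mk_iff] at h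
    obtain ⟨a, ha⟩ := h
    exact ⟨(a : ZMod 3), a.ne_zero, ha⟩
  · intro p
    obtain ⟨i, c, hc, hcv⟩ := Dsurj p.rep p.rep_nonzero
    refine ⟨i, ?_⟩
    conv_rhs => rw [← Projectivization.mk_rep p]
    rw [ep, Projectivization.mk_eq_mk_iff]
    refine ⟨(Units.mk0 c hc)⁻¹, ?_⟩
    rw [← hcv]
    funext k
    simp only [Units.smul_def, Units.val_inv_eq_inv_val, Units.val_mk0, Pi.smul_apply, smul_eq_mul]
    rw [← mul_assoc, inv_mul_cancel₀ hc, one_mul]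

lemma sum_P {M : Type*} [AddCommMonoid M] (f : P2F3 → M) : ∑ p, f p = ∑ i, f (ep i) :=
  (Fintype.sum_bijective ep ep_bij (fun i => f (ep i)) f (fun _ => rfl)).symm

lemma incid_ep (l p : Fin 13) : incid (ep l) (ep p) ↔ dv l p = 0 :=
  incid_mk (vv l) (vv p) (Dvne l) (Dvne p)

lemma chi_ep (l p : Fin 13) : chi (ep l) (ep p) = Am l p := by
  unfold chi Am
  rw [if_congr (incid_ep l p) rfl rfl]

lemma lineRoot_some (ℓ p : P2F3) : lineRoot ℓ (some p) = if incid ℓ p then (1:ℂ) else 0 := rfl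

lemma chi_val (ℓ p : P2F3) : ((chi ℓ p).val : ℂ) = lineRoot ℓ (some p) := by
  rw [lineRoot_some]
  unfold chi
  split <;> norm_num [ZMod.val_one]

lemma lineRoot_ep (l p : Fin 13) : lineRoot (ep l) (some (ep p)) = ((Am l p).val : ℂ) := by
  rw [← chi_val, chi_ep]

lemma lineRoot_mem (ℓ : P2F3) (i : Option P2F3) : lineRoot ℓ i ∈ Eis := by
  cases i with
  | none => exact one_mem _
  | some p =>
    rw [lineRoot_some]
    split
    · exact one_mem _
    · exact zero_mem _

lemma chi_sum (ℓ : P2F3) : ∑ p, chi ℓ p = 1 := by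
  obtain ⟨j, rfl⟩ := ep_bij.2 ℓ
  rw [sum_P]
  rw [Finset.sum_congr rfl fun i _ => chi_ep j i]
  exact D2' j

/-! #### The code-theoretic facts -/

lemma dotP_sub (x y z : P2F3 → ZMod 3) : dotP (x - y) z = dotP x z - dotP y z := by
  simp [dotP, sub_mul, Finset.sum_sub_distrib]

lemma dotP_add (x y z : P2F3 → ZMod 3) : dotP (x + y) z = dotP x z + dotP y z := by
  simp [dotP, add_mul, Finset.sum_add_distrib]

lemma dotP_smul (c : ZMod 3) (x z : P2F3 → ZMod 3) : dotP (c • x) z = c * dotP x z := by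
  simp [dotP, Finset.mul_sum, mul_assoc]

lemma mem_perp_of_const (y : P2F3 → ZMod 3)
    (h : ∀ ℓ m : P2F3, dotP (chi ℓ) y = dotP (chi m) y) : y ∈ CdiffPerp := by
  intro x hx
  induction hx using Submodule.span_induction with
  | mem v hv =>
    obtain ⟨l, m, rfl⟩ := hv
    rw [dotP_sub, h l m, sub_self]
  | zero => simp [dotP]
  | add a b _ _ ha hb => rw [dotP_add, ha, hb, add_zero]
  | smul c a _ ha => rw [dotP_smul, ha, mul_zero]

lemma dot_chi_chi (a b : P2F3) : dotP (chi a) (chi b) = 1 := by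
  obtain ⟨i, rfl⟩ := ep_bij.2 a
  obtain ⟨j, rfl⟩ := ep_bij.2 b
  rw [dotP, sum_P (fun p => chi (ep i) p * chi (ep j) p)]
  rw [Finset.sum_congr rfl fun k _ => by rw [chi_ep, chi_ep]]
  exact D3 i j

lemma chi_mem_perp (ℓ : P2F3) : chi ℓ ∈ CdiffPerp :=
  mem_perp_of_const _ fun a b => by rw [dot_chi_chi, dot_chi_chi]

lemma zero_mem_perp : (0 : P2F3 → ZMod 3) ∈ CdiffPerp := by
  intro x hx
  simp [dotP]

lemma dot_chi_eval (l : Fin 13) (c : P2F3 → ZMod 3) :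
    dotP (chi (ep l)) c = ∑ q, Am l q * c (ep q) := by
  rw [dotP, sum_P (fun p => chi (ep l) p * c p)]
  exact Finset.sum_congr rfl fun q _ => by rw [chi_ep]

/-- The inverse enumeration of the points. -/
def pidx : P2F3 → Fin 13 := (Equiv.ofBijective ep ep_bij).symm

lemma pidx_ep (l : Fin 13) : pidx (ep l) = l := (Equiv.ofBijective ep ep_bij).symm_apply_apply l

set_option maxHeartbeats 1000000 in
/-- The key fact: every element of `C^⊥` is a combination of lines. -/
lemma perp_spanned (c : P2F3 → ZMod 3) (hc : c ∈ CdiffPerp) :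
    ∃ t : P2F3 → ZMod 3, ∀ p, c p = ∑ ℓ, t ℓ * chi ℓ p := by
  set s := dotP (chi (ep 0)) c with hs
  have hdot : ∀ l : Fin 13, ∑ q, Am l q * c (ep q) = s := by
    intro l
    have h1 : dotP (chi (ep l) - chi (ep 0)) c = 0 :=
      hc _ (Submodule.subset_span ⟨ep l, ep 0, rfl⟩)
    rw [dotP_sub, sub_eq_zero] at h1
    rw [← dot_chi_eval, h1, hs]
  set z : Fin 13 → ZMod 3 := fun q => c (ep q) - s with hz
  have hker : ∀ l, ∑ q, Am l q * z q = 0 := by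
    intro l
    simp only [hz, mul_sub, Finset.sum_sub_distrib, hdot l, ← Finset.sum_mul, D2', one_mul,
      sub_self]
  have hrep : ∀ p : Fin 13, z p = ∑ l, Am l p * (∑ q, Hm l q * z q) := by
    intro p
    have e1 : z p = ∑ q, (if p = q then (1:ZMod 3) else 0) * z q := by simp
    rw [e1]
    calc ∑ q, (if p = q then (1:ZMod 3) else 0) * z q
        = ∑ q, ((∑ l, Am l p * Hm l q) + ∑ l, Nm p l * Am l q) * z q :=
          Finset.sum_congr rfl fun q _ => by rw [← D1]
      _ = (∑ q, ∑ l, Am l p * Hm l q * z q) + ∑ q, ∑ l, Nm p l * Am l q * z q := by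
          simp [add_mul, Finset.sum_add_distrib, Finset.sum_mul]
      _ = (∑ l, ∑ q, Am l p * Hm l q * z q) + ∑ l, ∑ q, Nm p l * Am l q * z q := by
          rw [Finset.sum_comm, Finset.sum_comm (f := fun q l => Nm p l * Am l q * z q)]
      _ = (∑ l, Am l p * ∑ q, Hm l q * z q) + ∑ l, Nm p l * ∑ q, Am l q * z q := by
          simp [Finset.mul_sum, mul_assoc]
      _ = ∑ l, Am l p * ∑ q, Hm l q * z q := by
          simp [hker]
  refine ⟨fun ℓ => (∑ q, Hm (pidx ℓ) q * z q) + s, ?_⟩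
  intro p
  obtain ⟨i, rfl⟩ := ep_bij.2 p
  have hcz : c (ep i) = z i + s := by simp [hz]
  have h4 : ∀ l : Fin 13, ((∑ q, Hm (pidx (ep l)) q * z q) + s) * chi (ep l) (ep i)
      = (∑ q, Hm l q * z q) * Am l i + s * Am l i := by
    intro l
    rw [pidx_ep l, chi_ep]
    ring
  rw [hcz, hrep i, sum_P (fun ℓ => ((∑ q, Hm (pidx ℓ) q * z q) + s) * chi ℓ (ep i))]
  rw [Finset.sum_congr rfl fun l _ => h4 l, Finset.sum_add_distrib, ← Finset.mul_sum, D2, mul_one]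
  exact congrArg (· + s) (Finset.sum_congr rfl fun l _ => mul_comm _ _)

/-! ### The main theorem -/

set_option maxHeartbeats 1000000 in
/-- `L` is spanned as an `Eis`-module by the 13 point roots and the 13 line roots. -/
theorem stmt16 :
    (∀ q : P2F3, pointRoot q ∈ L16) ∧
    (∀ ℓ : P2F3, lineRoot ℓ ∈ L16) ∧
    ∀ x ∈ L16, ∃ a b : P2F3 → ℂ,
      (∀ p, a p ∈ Eis) ∧ (∀ ℓ, b ℓ ∈ Eis) ∧
      x = (∑ p : P2F3, a p • pointRoot p) + ∑ ℓ : P2F3, b ℓ • lineRoot ℓ := by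
  refine ⟨?_, ?_, ?_⟩
  · -- point roots are in L
    intro q
    refine ⟨?_, ⟨-1, neg_mem (one_mem _), ?_⟩, 0, zero_mem_perp, ?_⟩
    · intro i
      unfold pointRoot
      split
      · exact theta_mem
      · exact zero_mem _
    · have h1 : pointRoot q none = 0 := by simp [pointRoot]
      have h2 : ∑ p, pointRoot q (some p) = θ := by
        unfold pointRoot
        simp
      rw [h1, h2]; ring
    · intro p
      refine ⟨if p = q then 1 else 0, ?_, ?_⟩
      · split
        · exact one_mem _
        · exact zero_mem _
      · unfold pointRoot
        simp only [Pi.zero_apply, ZMod.val_zero, Nat.cast_zero, sub_zero, Option.some.injEq]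
        split <;> ring
  · -- line roots are in L
    intro ℓ
    refine ⟨?_, ⟨θ, theta_mem, ?_⟩, chi ℓ, chi_mem_perp ℓ, ?_⟩
    · intro i; exact lineRoot_mem ℓ i
    · have h1 : lineRoot ℓ none = 1 := rfl
      have h2 : ∑ p, lineRoot ℓ (some p) = 4 := by
        obtain ⟨j, rfl⟩ := ep_bij.2 ℓ
        rw [sum_P (fun p => lineRoot (ep j) (some p))]
        rw [Finset.sum_congr rfl fun i _ => lineRoot_ep j i]
        rw [← Nat.cast_sum, D4 j]
        norm_num
      rw [h1, h2, theta_sq]; ring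
    · intro p
      refine ⟨0, zero_mem _, ?_⟩
      rw [chi_val, sub_self, mul_zero]
  · -- every element of L is a combination
    rintro x ⟨hE, ⟨e0, he0, h0⟩, c, hc, hcp⟩
    choose ev hev1 hev2 using hcp
    obtain ⟨t, ht⟩ := perp_spanned c hc
    set ℓ0 : P2F3 := ep 0 with hℓ0
    set b' : P2F3 → ℂ := fun ℓ => ((t ℓ).val : ℂ) with hb'
    have hsum3 : (((∑ p, (c p).val : ℕ) : ZMod 3)) = ((∑ ℓ, (t ℓ).val : ℕ) : ZMod 3) := by
      push_cast
      simp only [ZMod.natCast_val, ZMod.cast_id]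
      calc ∑ p, c p = ∑ p, ∑ ℓ, t ℓ * chi ℓ p := Finset.sum_congr rfl fun p _ => ht p
        _ = ∑ ℓ, t ℓ * ∑ p, chi ℓ p := by
            rw [Finset.sum_comm]
            exact Finset.sum_congr rfl fun ℓ _ => by rw [Finset.mul_sum]
        _ = ∑ ℓ, t ℓ := Finset.sum_congr rfl fun ℓ _ => by rw [chi_sum, mul_one]
    have hIb : Ith (x none - ∑ ℓ, b' ℓ) := by
      have key : x none - ∑ ℓ, b' ℓ = (x none - ∑ p, x (some p)) +
          (∑ p, (x (some p) - ((c p).val : ℂ))) +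
          ((((∑ p, (c p).val : ℕ) : ℂ)) - (((∑ ℓ, (t ℓ).val : ℕ) : ℂ))) := by
        rw [Finset.sum_sub_distrib]
        push_cast
        simp only [hb']
        ring
      rw [key]
      refine ith_add (ith_add ⟨e0, he0, h0⟩ ?_) (ith_nat _ _ hsum3)
      exact ith_sum fun p _ => ⟨ev p, hev1 p, hev2 p⟩
    obtain ⟨d, hd, hδ⟩ := hIb
    set b : P2F3 → ℂ := fun ℓ => b' ℓ + (if ℓ = ℓ0 then θ * d else 0) with hb
    have hbE : ∀ ℓ, b ℓ ∈ Eis := by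
      intro ℓ
      refine add_mem (natCast_mem Eis _) ?_
      split
      · exact mul_mem theta_mem hd
      · exact zero_mem _
    have hsumb : ∑ ℓ, b ℓ = x none := by
      simp only [hb, Finset.sum_add_distrib, Finset.sum_ite_eq', Finset.mem_univ, if_true]
      linear_combination -hδ
    have hIp : ∀ p : P2F3, Ith (x (some p) - ∑ ℓ, b ℓ * lineRoot ℓ (some p)) := by
      intro p
      have hsplit : ∑ ℓ, b ℓ * lineRoot ℓ (some p) =
          (∑ ℓ, b' ℓ * lineRoot ℓ (some p)) + θ * d * lineRoot ℓ0 (some p) := by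
        simp only [hb, add_mul, Finset.sum_add_distrib, ite_mul, zero_mul,
          Finset.sum_ite_eq', Finset.mem_univ, if_true]
      have hcast : ∑ ℓ, b' ℓ * lineRoot ℓ (some p) =
          ((∑ ℓ, (t ℓ).val * (chi ℓ p).val : ℕ) : ℂ) := by
        push_cast
        exact Finset.sum_congr rfl fun ℓ _ => by rw [hb', chi_val]
      have key : x (some p) - ∑ ℓ, b ℓ * lineRoot ℓ (some p) =
          (x (some p) - ((c p).val : ℂ)) +
          ((((c p).val : ℂ)) - ((∑ ℓ, (t ℓ).val * (chi ℓ p).val : ℕ) : ℂ)) -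
          θ * (d * lineRoot ℓ0 (some p)) := by
        rw [hsplit, hcast]; ring
      rw [key]
      refine ith_sub (ith_add ⟨ev p, hev1 p, hev2 p⟩ (ith_nat _ _ ?_))
        (ith_theta (mul_mem hd (lineRoot_mem ℓ0 (some p))))
      push_cast
      simp only [ZMod.natCast_val, ZMod.cast_id]
      exact ht p
    choose a haE ha using hIp
    refine ⟨a, b, haE, hbE, ?_⟩
    funext i
    rw [Pi.add_apply, Finset.sum_apply, Finset.sum_apply]
    cases i with
    | none =>
      have h1 : ∑ p, (a p • pointRoot p) none = 0 := by
        simp [pointRoot]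
      have h2 : ∑ ℓ, (b ℓ • lineRoot ℓ) none = ∑ ℓ, b ℓ := by
        refine Finset.sum_congr rfl fun ℓ _ => ?_
        have : lineRoot ℓ none = 1 := rfl
        rw [Pi.smul_apply, this, smul_eq_mul, mul_one]
      rw [h1, h2, hsumb, zero_add]
    | some p =>
      have h1 : ∑ q, (a q • pointRoot q) (some p) = θ * a p := by
        simp only [Pi.smul_apply, pointRoot, smul_eq_mul, Option.some.injEq, mul_ite, mul_zero]
        rw [Finset.sum_ite_eq, if_pos (Finset.mem_univ p)]
        ring
      have h2 : ∑ ℓ, (b ℓ • lineRoot ℓ) (some p) = ∑ ℓ, b ℓ * lineRoot ℓ (some p) :=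
        Finset.sum_congr rfl fun ℓ _ => by rw [Pi.smul_apply, smul_eq_mul]
      rw [h1, h2]
      linear_combination ha p
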